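/- Gyöngy–Krylov criterion: let (X_n) be a sequence of random elements of a Polish space E. Then X_n converges in probability to some E-valued random element if and only if for every pair of subsequences (X_{ℓ(k)}, X_{m(k)}), there is a further subsequence whose joint laws converge weakly to a probability measure on E × E supported on the diagonal {(x,y) : x = y}. -/

import Mathlib

open MeasureTheory Filter Topology ENNReal

private lemma gk_exists_seq_pair {Q : ℕ → ℕ → Prop}
    (h : ∀ N : ℕ, ∃ n ≥ N, ∃ m ≥ N, Q n m) :
    ∃ l m : ℕ → ℕ, StrictMono l ∧ StrictMono m ∧ ∀ k, Q (l k) (m k) := by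
  choose f hf g hg hQ using h
  set r : ℕ → ℕ := fun k => Nat.rec 0 (fun _ ih => max (f ih) (g ih) + 1) k with hr
  refine ⟨fun k => f (r k), fun k => g (r k), ?_, ?_, fun k => hQ (r k)⟩
  · refine strictMono_nat_of_lt_succ fun k => ?_
    have h1 : f (r k) < r (k + 1) := Nat.lt_succ_of_le (le_max_left _ _)
    exact lt_of_lt_of_le h1 (hf _)
  · refine strictMono_nat_of_lt_succ fun k => ?_
    have h1 : g (r k) < r (k + 1) := Nat.lt_succ_of_le (le_max_right _ _)
    exact lt_of_lt_of_le h1 (hg _)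

/-- Gyöngy–Krylov criterion.  Let `(X_n)` be random elements of a
Polish space `E`.  Then `X_n` converges in probability to some `E`-valued
random element iff for every pair of subsequences `(X_{ℓ(k)}, X_{m(k)})` there
is a further subsequence whose joint laws converge weakly (tested against
bounded continuous functions) to a probability measure on `E × E` supported on
the diagonal. -/
theorem stmt_18 {E : Type*} [MetricSpace E] [CompleteSpace E]
    [SecondCountableTopology E] [MeasurableSpace E] [BorelSpace E]
    {Ω : Type*} [MeasurableSpace Ω] (P : Measure Ω) [IsProbabilityMeasure P]
    (X : ℕ → Ω → E) (hX : ∀ n, Measurable (X n)) :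
    (∃ Y : Ω → E, Measurable Y ∧ TendstoInMeasure P X atTop Y) ↔
    (∀ l m : ℕ → ℕ, StrictMono l → StrictMono m →
      ∃ n : ℕ → ℕ, StrictMono n ∧
        ∃ μ : Measure (E × E), IsProbabilityMeasure μ ∧
          μ {p : E × E | p.1 = p.2} = 1 ∧
          ∀ g : BoundedContinuousFunction (E × E) ℝ,
            Tendsto (fun k => ∫ ω, g (X (l (n k)) ω, X (m (n k)) ω) ∂P) atTop
              (nhds (∫ p, g p ∂μ))) := by
  have hdiagmeas : MeasurableSet {p : E × E | p.1 = p.2} :=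
    (isClosed_eq continuous_fst continuous_snd).measurableSet
  constructor
  · rintro ⟨Y, hY, hXY⟩ l m hl hm
    have hYY : Measurable fun ω => (Y ω, Y ω) := hY.prodMk hY
    refine ⟨id, strictMono_id, Measure.map (fun ω => (Y ω, Y ω)) P,
      Measure.isProbabilityMeasure_map hYY.aemeasurable, ?_, ?_⟩
    · rw [Measure.map_apply hYY hdiagmeas]
      simp
    · intro g
      have hint : ∫ p, g p ∂(Measure.map (fun ω => (Y ω, Y ω)) P)
          = ∫ ω, g (Y ω, Y ω) ∂P :=
        integral_map hYY.aemeasurable g.continuous.measurable.aestronglyMeasurable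
      rw [hint]
      have hpair : TendstoInMeasure P (fun k ω => (X (l k) ω, X (m k) ω)) atTop
          (fun ω => (Y ω, Y ω)) := by
        rw [tendstoInMeasure_iff_dist]
        intro ε hε
        have hsub : ∀ k, P {ω | ε ≤ dist ((X (l k) ω, X (m k) ω)) ((Y ω, Y ω))}
            ≤ P {ω | ε ≤ dist (X (l k) ω) (Y ω)} + P {ω | ε ≤ dist (X (m k) ω) (Y ω)} := by
          intro k
          refine le_trans (measure_mono ?_) (measure_union_le _ _)
          intro ω hω
          simp only [Set.mem_setOf_eq, Prod.dist_eq, le_max_iff] at hω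
          simpa only [Set.mem_union, Set.mem_setOf_eq] using hω
        have h1 : Tendsto (fun k => P {ω | ε ≤ dist (X (l k) ω) (Y ω)}) atTop (𝓝 0) :=
          (tendstoInMeasure_iff_dist.mp hXY ε hε).comp hl.tendsto_atTop
        have h2 : Tendsto (fun k => P {ω | ε ≤ dist (X (m k) ω) (Y ω)}) atTop (𝓝 0) :=
          (tendstoInMeasure_iff_dist.mp hXY ε hε).comp hm.tendsto_atTop
        have hsum := h1.add h2
        rw [add_zero] at hsum
        exact tendsto_of_tendsto_of_tendsto_of_le_of_le tendsto_const_nhds hsum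
          (fun k => zero_le) hsub
      refine tendsto_of_subseq_tendsto fun ns hns => ?_
      have hcomp : TendstoInMeasure P (fun j ω => (X (l (ns j)) ω, X (m (ns j)) ω)) atTop
          (fun ω => (Y ω, Y ω)) := fun ε hε => (hpair ε hε).comp hns
      obtain ⟨ms, _, hae⟩ := hcomp.exists_seq_tendsto_ae
      refine ⟨ms, ?_⟩
      refine tendsto_integral_of_dominated_convergence (fun _ => ‖g‖) ?_ (integrable_const _)
        ?_ ?_
      · intro j
        exact (g.continuous.measurable.comp ((hX _).prodMk (hX _))).aestronglyMeasurable
      · intro j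
        exact Eventually.of_forall fun ω => g.norm_coe_le_norm _
      · filter_upwards [hae] with ω hω using ((g.continuous.tendsto _).comp hω)
  · intro H
    -- Step 1: the sequence is Cauchy in probability.
    have cauchy : ∀ ε : ℝ, 0 < ε → ∀ δ : ℝ≥0∞, 0 < δ →
        ∃ N, ∀ n ≥ N, ∀ m' ≥ N, P {ω | ε ≤ dist (X n ω) (X m' ω)} < δ := by
      intro ε hε δ hδ
      by_contra hcon
      push_neg at hcon
      obtain ⟨l, m, hl, hm, hQ⟩ := gk_exists_seq_pair hcon
      obtain ⟨n, hn, μ, hμ, hdiag, hconv⟩ := H l m hl hm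
      -- bounded continuous test function vanishing on the diagonal
      set g0 : E × E → ℝ := fun p => min (dist p.1 p.2 / ε) 1 with hg0
      have hg0c : Continuous g0 :=
        ((continuous_fst.dist continuous_snd).div_const ε).min continuous_const
      have hg0nonneg : ∀ p, 0 ≤ g0 p := fun p =>
        le_min (div_nonneg dist_nonneg hε.le) zero_le_one
      have hg0le : ∀ p, g0 p ≤ 1 := fun p => min_le_right _ _
      have hg0bdd : ∀ p, ‖g0 p‖ ≤ 1 := fun p => by
        rw [Real.norm_eq_abs, abs_le]
        exact ⟨le_trans (by norm_num) (hg0nonneg p), hg0le p⟩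
      set g : BoundedContinuousFunction (E × E) ℝ :=
        BoundedContinuousFunction.ofNormedAddCommGroup g0 hg0c 1 hg0bdd with hgdef
      have hgzero : ∫ p, g p ∂μ = 0 := by
        refine integral_eq_zero_of_ae ?_
        have hcompl : μ ({p : E × E | p.1 = p.2}ᶜ) = 0 := by
          rw [measure_compl hdiagmeas (measure_ne_top μ _), hdiag, measure_univ, tsub_self]
        refine (measure_mono_null ?_ hcompl : μ {p | ¬ (g : E × E → ℝ) p = 0} = 0)
        intro p hp
        simp only [Set.mem_setOf_eq] at hp ⊢
        intro hpeq
        apply hp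
        show g0 p = 0
        simp only [Set.mem_setOf_eq] at hpeq
        rw [hg0]
        simp [hpeq]
      have hconvg := hconv g
      rw [hgzero] at hconvg
      -- each integral is at least δ.toReal
      have hδ1 : δ ≤ 1 := le_trans (hQ 0) prob_le_one
      have hδtop : δ ≠ ⊤ := (lt_of_le_of_lt hδ1 (by norm_num)).ne
      have hδpos : 0 < δ.toReal := ENNReal.toReal_pos hδ.ne' hδtop
      have hlower : ∀ k, δ.toReal ≤ ∫ ω, g (X (l (n k)) ω, X (m (n k)) ω) ∂P := by
        intro k
        set A : Set Ω := {ω | ε ≤ dist (X (l (n k)) ω) (X (m (n k)) ω)} with hA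
        have hAmeas : MeasurableSet A :=
          measurableSet_le measurable_const ((hX _).dist (hX _))
        have hmeasf : Measurable fun ω => (g : E × E → ℝ) (X (l (n k)) ω, X (m (n k)) ω) :=
          g.continuous.measurable.comp ((hX _).prodMk (hX _))
        have hintf : Integrable (fun ω => (g : E × E → ℝ) (X (l (n k)) ω, X (m (n k)) ω)) P := by
          refine Integrable.mono' (integrable_const 1) hmeasf.aestronglyMeasurable ?_
          exact Eventually.of_forall fun ω => hg0bdd _
        have h1 : δ.toReal ≤ (P A).toReal := by
          apply ENNReal.toReal_mono (measure_ne_top P A) (hQ (n k))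
        have h2 : (P A).toReal = ∫ ω in A, (1 : ℝ) ∂P := by
          rw [setIntegral_const]; simp; rfl
        have h3 : ∫ ω in A, (1 : ℝ) ∂P
            ≤ ∫ ω in A, (g : E × E → ℝ) (X (l (n k)) ω, X (m (n k)) ω) ∂P := by
          refine setIntegral_mono_on (integrableOn_const (measure_ne_top P A))
            hintf.integrableOn hAmeas fun ω hω => ?_
          show (1 : ℝ) ≤ g0 _
          rw [hg0]
          refine le_min ?_ le_rfl
          rw [le_div_iff₀ hε, one_mul]
          exact hω
        have h4 : ∫ ω in A, (g : E × E → ℝ) (X (l (n k)) ω, X (m (n k)) ω) ∂P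
            ≤ ∫ ω, (g : E × E → ℝ) (X (l (n k)) ω, X (m (n k)) ω) ∂P :=
          setIntegral_le_integral hintf (Eventually.of_forall fun ω => hg0nonneg _)
        linarith
      have : δ.toReal ≤ 0 := ge_of_tendsto' hconvg hlower
      linarith
    -- `hQ k` above needs index `n k`; make sure hlower uses hQ correctly.
    -- Step 2: extract an a.e. convergent subsequence via Borel–Cantelli.
    have key : ∀ k : ℕ, ∃ N, ∀ n ≥ N, ∀ m' ≥ N,
        P {ω | (2⁻¹ : ℝ) ^ k ≤ dist (X n ω) (X m' ω)} < (2⁻¹ : ℝ≥0∞) ^ k := by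
      intro k
      refine cauchy _ (by positivity) _ (ENNReal.pow_pos ?_ k)
      simp [ENNReal.inv_pos]
    choose N hN using key
    obtain ⟨φ, hφs, hφN⟩ : ∃ φ : ℕ → ℕ, StrictMono φ ∧ ∀ k, N k ≤ φ k := by
      refine ⟨fun k => Nat.rec (N 0) (fun k ih => max (N (k + 1)) (ih + 1)) k,
        strictMono_nat_of_lt_succ fun k => ?_, fun k => ?_⟩
      · exact lt_of_lt_of_le (Nat.lt_succ_self _) (le_max_right _ _)
      · cases k with
        | zero => exact le_refl _
        | succ k => exact le_max_left _ _
    set A : ℕ → Set Ω :=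
      fun k => {ω | (2⁻¹ : ℝ) ^ k ≤ dist (X (φ k) ω) (X (φ (k + 1)) ω)} with hAdef
    have hA : ∀ k, P (A k) ≤ (2⁻¹ : ℝ≥0∞) ^ k := fun k =>
      (hN k (φ k) (hφN k) (φ (k + 1)) (le_trans (hφN k) (hφs.monotone (Nat.le_succ k)))).le
    have htsum : (∑' k, P (A k)) ≠ ⊤ := by
      refine ne_top_of_le_ne_top ?_ (ENNReal.tsum_le_tsum hA)
      rw [ENNReal.tsum_geometric, ENNReal.one_sub_inv_two]
      simp
    have hae : ∀ᵐ ω ∂P, ∃ y : E, Tendsto (fun k => X (φ k) ω) atTop (𝓝 y) := by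
      filter_upwards [ae_eventually_notMem htsum] with ω hω
      obtain ⟨K, hK⟩ := eventually_atTop.mp hω
      have hcs : CauchySeq fun j => X (φ (j + K)) ω := by
        refine cauchySeq_of_dist_le_of_summable (fun j => (2⁻¹ : ℝ) ^ (j + K)) ?_ ?_
        · intro j
          have h1 := hK (j + K) (Nat.le_add_left _ _)
          rw [hAdef] at h1
          simp only [Set.mem_setOf_eq, not_le] at h1
          have : j + 1 + K = j + K + 1 := by omega
          rw [this]
          exact h1.le
        · simp_rw [pow_add]
          exact (summable_geometric_of_lt_one (by norm_num) (by norm_num)).mul_right _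
      obtain ⟨y, hy⟩ := cauchySeq_tendsto_of_complete hcs
      exact ⟨y, (tendsto_add_atTop_iff_nat K).mp hy⟩
    obtain ⟨Y, hYmeas, hYtendsto⟩ :=
      measurable_limit_of_tendsto_metrizable_ae (fun k => (hX (φ k)).aemeasurable) hae
    have hYconv : TendstoInMeasure P (fun k => X (φ k)) atTop Y :=
      tendstoInMeasure_of_tendsto_ae (fun k => (hX (φ k)).aestronglyMeasurable) hYtendsto
    refine ⟨Y, hYmeas, ?_⟩
    rw [tendstoInMeasure_iff_dist]
    intro ε hε
    rw [ENNReal.tendsto_atTop_zero]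
    intro δ hδ
    obtain ⟨N₁, hN₁⟩ := cauchy (ε / 2) (half_pos hε) (δ / 2) (ENNReal.half_pos hδ.ne')
    have h2 := tendstoInMeasure_iff_dist.mp hYconv (ε / 2) (half_pos hε)
    rw [ENNReal.tendsto_atTop_zero] at h2
    obtain ⟨K, hK⟩ := h2 (δ / 2) (ENNReal.half_pos hδ.ne')
    set k₀ := max K N₁ with hk₀
    have hφk : N₁ ≤ φ k₀ := le_trans (le_max_right _ _) hφs.le_apply
    refine ⟨N₁, fun n hn => ?_⟩
    have hsub : {ω | ε ≤ dist (X n ω) (Y ω)}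
        ⊆ {ω | ε / 2 ≤ dist (X n ω) (X (φ k₀) ω)} ∪ {ω | ε / 2 ≤ dist (X (φ k₀) ω) (Y ω)} := by
      intro ω hω
      simp only [Set.mem_setOf_eq] at hω
      by_contra hcon
      simp only [Set.mem_union, Set.mem_setOf_eq, not_or, not_le] at hcon
      have htri := dist_triangle (X n ω) (X (φ k₀) ω) (Y ω)
      linarith [hcon.1, hcon.2]
    calc P {ω | ε ≤ dist (X n ω) (Y ω)}
        ≤ P {ω | ε / 2 ≤ dist (X n ω) (X (φ k₀) ω)}
          + P {ω | ε / 2 ≤ dist (X (φ k₀) ω) (Y ω)} :=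
          le_trans (measure_mono hsub) (measure_union_le _ _)
      _ ≤ δ / 2 + δ / 2 :=
          add_le_add (hN₁ n hn (φ k₀) hφk).le (hK k₀ (le_max_left _ _))
      _ = δ := ENNReal.add_halves δ
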